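/- arXiv:1307.3176 — 3 statements merged into one kernel-verified Lean document; each statement's English description precedes it below -/
import Mathlib

section
/- With step sizes γ_i = κc/(c+i) for constants κ ∈ (0,1), c > 0, μ > 0 satisfying μcκ(1-κ) > 1/2, the sum ∑_{i=1}^n L_i², where L_i² := γ_i² ∏_{j=i}^{n-1}(1 - 2μγ_{j+1}(1-γ_{j+1})), is bounded by κ²c²/((2μcκ(1-κ) - 1)·(n+c)), provided γ_j ∈ (0,1) and 2μγ_j(1-γ_j) ∈ (0,1) for all j. -/
set_option maxHeartbeats 1000000 in
/-- With step sizes `γ_i = κc/(c+i)`, `κ ∈ (0,1)`, `c > 0`, `μ > 0`, `μcκ(1-κ) > 1/2`,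
the sum `∑_{i=1}^n L_i²` with `L_i² = γ_i² ∏_{j=i}^{n-1} (1 - 2μγ_{j+1}(1-γ_{j+1}))`
is bounded by `κ²c² / ((2μcκ(1-κ) - 1)(n+c))`. -/
theorem stmt4 (κ c μ : ℝ) (n : ℕ)
    (hκ : κ ∈ Set.Ioo (0 : ℝ) 1) (hc : 0 < c) (hμ : 0 < μ)
    (γ : ℕ → ℝ) (hγ : ∀ i : ℕ, γ i = κ * c / (c + i))
    (hkey : 1 / 2 < μ * c * κ * (1 - κ))
    (hfac : ∀ j : ℕ, 0 < 2 * μ * γ j * (1 - γ j) ∧ 2 * μ * γ j * (1 - γ j) < 1) :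
    ∑ i ∈ Finset.Icc 1 n,
        (γ i) ^ 2 * ∏ j ∈ Finset.Icc i (n - 1), (1 - 2 * μ * γ (j + 1) * (1 - γ (j + 1))) ≤
      κ ^ 2 * c ^ 2 / ((2 * μ * c * κ * (1 - κ) - 1) * ((n : ℝ) + c)) := by
  obtain ⟨hκ0, hκ1⟩ := hκ
  have hA : 0 < 2 * μ * c * κ * (1 - κ) - 1 := by linarith
  induction n with
  | zero =>
    rw [show Finset.Icc 1 0 = (∅ : Finset ℕ) from Finset.Icc_eq_empty (by omega)]
    simp only [Finset.sum_empty, Nat.cast_zero, zero_add]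
    positivity
  | succ n ih =>
    have hrec : ∑ i ∈ Finset.Icc 1 (n+1),
        (γ i) ^ 2 * ∏ j ∈ Finset.Icc i ((n+1) - 1), (1 - 2 * μ * γ (j + 1) * (1 - γ (j + 1)))
        = γ (n+1) ^ 2 + (1 - 2 * μ * γ (n+1) * (1 - γ (n+1))) *
          ∑ i ∈ Finset.Icc 1 n,
            (γ i) ^ 2 * ∏ j ∈ Finset.Icc i (n - 1), (1 - 2 * μ * γ (j + 1) * (1 - γ (j + 1))) := by
      rw [Finset.sum_Icc_succ_top (by omega : 1 ≤ n + 1)]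
      simp only [Nat.add_sub_cancel]
      rw [show Finset.Icc (n+1) n = (∅ : Finset ℕ) from Finset.Icc_eq_empty (by omega),
        Finset.prod_empty, mul_one, Finset.mul_sum, add_comm]
      congr 1
      cases n with
      | zero => simp
      | succ k =>
        apply Finset.sum_congr rfl
        intro i hi
        simp only [Finset.mem_Icc] at hi
        rw [Finset.prod_Icc_succ_top (by omega : i ≤ k + 1)]
        simp only [Nat.add_sub_cancel]
        ring
    rw [hrec]
    push_cast
    have hβ := (hfac (n+1)).2
    have hfn : 0 < c + ((n:ℝ)+1) := by positivity
    have hfn0 : 0 < (n:ℝ) + c := by positivity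
    have hfn1 : 0 < (n:ℝ) + 1 + c := by positivity
    have hstep : γ (n+1) ^ 2 + (1 - 2 * μ * γ (n+1) * (1 - γ (n+1))) *
        (κ ^ 2 * c ^ 2 / ((2 * μ * c * κ * (1 - κ) - 1) * ((n : ℝ) + c)))
        ≤ κ ^ 2 * c ^ 2 / ((2 * μ * c * κ * (1 - κ) - 1) * ((n:ℝ) + 1 + c)) := by
      rw [hγ (n+1)]
      push_cast
      rw [← sub_nonneg]
      have hexp : κ ^ 2 * c ^ 2 / ((2 * μ * c * κ * (1 - κ) - 1) * ((n:ℝ) + 1 + c)) -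
          ((κ * c / (c + ((n:ℝ) + 1))) ^ 2 +
            (1 - 2 * μ * (κ * c / (c + ((n:ℝ) + 1))) * (1 - κ * c / (c + ((n:ℝ) + 1)))) *
              (κ ^ 2 * c ^ 2 / ((2 * μ * c * κ * (1 - κ) - 1) * ((n : ℝ) + c))))
          = κ ^ 2 * c ^ 2 * (2 * μ * κ ^ 2 * c * ((n:ℝ)+1) + 2 * μ * κ * c * (1 - κ) - 1) /
            ((2 * μ * c * κ * (1 - κ) - 1) * ((n:ℝ) + c) * (c + ((n:ℝ)+1))^2) := by
        obtain ⟨A, hAd⟩ : ∃ A, 2 * μ * c * κ * (1 - κ) - 1 = A := ⟨_, rfl⟩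
        rw [hAd] at hA ⊢
        have hA' := hA.ne'
        have h1 := hfn.ne'
        have h2 := hfn0.ne'
        have h3 := hfn1.ne'
        field_simp
        rw [← hAd]
        ring
      rw [hexp]
      apply div_nonneg
      · have h1 : (0:ℝ) ≤ 2 * μ * κ ^ 2 * c * ((n:ℝ)+1) := by positivity
        have h2 : 2 * μ * κ * c * (1 - κ) = 2 * (μ * c * κ * (1 - κ)) := by ring
        apply mul_nonneg (by positivity)
        rw [h2]; linarith
      · positivity
    refine le_trans ?_ hstep
    have hβ' : (0:ℝ) ≤ 1 - 2 * μ * γ (n+1) * (1 - γ (n+1)) := by linarith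
    gcongr
end

section
/- Let γ_k = κc/(c+k) with μcκ > 1/2. Then ∑_{k=1}^n exp(-2μ(Γ_n - Γ_k))/(μ²k²) ≤ C/(n+c) for some constant C depending only on μ, c, κ, where Γ_n = ∑_{i=1}^n κc/(c+i). (Specifically, using exp(-2μ(Γ_n-Γ_k)) ≤ ((k+c)/(n+c))^{2μcκ}, the sum is O(1/(n+c)).) -/
open Real Finset

/-- Telescoping log sum. -/
private lemma tele_log (c : ℝ) (k : ℕ) : ∀ n : ℕ, k ≤ n →
    ∑ i ∈ Finset.Ioc k n, (Real.log (c + i + 1) - Real.log (c + i)) =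
      Real.log (c + n + 1) - Real.log (c + k + 1) := by
  intro n hn
  induction n, hn using Nat.le_induction with
  | base => simp
  | succ n hn ih =>
      rw [Finset.sum_Ioc_succ_top hn, ih]
      push_cast
      ring

/-- Lower bound on rpow differences: for `c ≤ x`, `0 < p`,
`(x+1)^(p-1) ≤ (1+1/c)^p / p * ((x+1)^p - x^p)`. -/
private lemma diff_lower {c p : ℝ} (hc : 0 < c) (hp : 0 < p) {x : ℝ} (hx : c ≤ x) :
    (x + 1) ^ (p - 1) ≤ (1 + 1 / c) ^ p / p * ((x + 1) ^ p - x ^ p) := by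
  have hx0 : 0 < x := hc.trans_le hx
  have hx1 : 0 < x + 1 := by linarith
  have hM : (1 : ℝ) ≤ (1 + 1 / c) ^ p := Real.one_le_rpow (by nlinarith [one_div_pos.2 hc]) hp.le
  rcases le_total p 1 with hp1 | hp1
  · -- x^p ≤ (x+1)^p - p (x+1)^(p-1)
    have hB : x ^ p ≤ (x + 1) ^ p - p * (x + 1) ^ (p - 1) := by
      have hs : (-1 : ℝ) ≤ -(1 / (x + 1)) := by
        rw [neg_le_neg_iff]
        exact div_le_one_of_le₀ (by linarith) hx1.le
      have hber := rpow_one_add_le_one_add_mul_self hs hp.le hp1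
      have hxx : (1 + -(1 / (x + 1))) = x / (x + 1) := by field_simp; ring
      rw [hxx, Real.div_rpow hx0.le hx1.le, div_le_iff₀ (by positivity)] at hber
      calc x ^ p ≤ (1 + p * -(1 / (x + 1))) * (x + 1) ^ p := hber
        _ = (x + 1) ^ p - p * ((x + 1) ^ p / (x + 1)) := by ring
        _ = (x + 1) ^ p - p * (x + 1) ^ (p - 1) := by
            rw [← Real.rpow_sub_one hx1.ne']
    calc (x + 1) ^ (p - 1)
        = (1 : ℝ) * (x + 1) ^ (p - 1) := (one_mul _).symm
      _ ≤ (1 + 1 / c) ^ p * (x + 1) ^ (p - 1) := by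
          apply mul_le_mul_of_nonneg_right hM (Real.rpow_nonneg hx1.le _)
      _ ≤ (1 + 1 / c) ^ p / p * ((x + 1) ^ p - x ^ p) := by
          rw [div_mul_eq_mul_div, le_div_iff₀ hp]
          have h1 : p * (x + 1) ^ (p - 1) ≤ (x + 1) ^ p - x ^ p := by linarith
          calc (1 + 1 / c) ^ p * (x + 1) ^ (p - 1) * p
              = (1 + 1 / c) ^ p * (p * (x + 1) ^ (p - 1)) := by ring
            _ ≤ (1 + 1 / c) ^ p * ((x + 1) ^ p - x ^ p) :=
                mul_le_mul_of_nonneg_left h1 (by positivity)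
  · -- p ≥ 1 case
    have hB : x ^ p + p * x ^ (p - 1) ≤ (x + 1) ^ p := by
      have hs : (-1 : ℝ) ≤ 1 / x := by
        have : (0:ℝ) < 1 / x := by positivity
        linarith
      have hber := one_add_mul_self_le_rpow_one_add hs hp1
      have hxx : (1 + 1 / x) = (x + 1) / x := by field_simp
      rw [hxx, Real.div_rpow (by linarith) hx0.le, le_div_iff₀ (by positivity)] at hber
      calc x ^ p + p * x ^ (p - 1) = (1 + p * (1 / x)) * x ^ p := by
            rw [Real.rpow_sub_one hx0.ne']
            field_simp
        _ ≤ (x + 1) ^ p := hber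
    have hstep : (x + 1) ^ (p - 1) ≤ (1 + 1 / c) ^ p * x ^ (p - 1) := by
      have h1 : (x + 1) ^ (p - 1) = ((x + 1) / x) ^ (p - 1) * x ^ (p - 1) := by
        rw [← Real.mul_rpow (by positivity) hx0.le, div_mul_cancel₀ _ hx0.ne']
      rw [h1]
      have h2 : ((x + 1) / x) ^ (p - 1) ≤ (1 + 1 / c) ^ (p - 1) := by
        apply Real.rpow_le_rpow (by positivity) _ (by linarith)
        rw [div_le_iff₀ hx0]
        have hxc : 1 ≤ x / c := (one_le_div hc).mpr hx
        calc x + 1 ≤ x + x / c := by linarith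
          _ = (1 + 1 / c) * x := by ring
      have h3 : (1 + 1 / c) ^ (p - 1) ≤ (1 + 1 / c) ^ p := by
        apply Real.rpow_le_rpow_of_exponent_le _ (by linarith)
        have : (0:ℝ) < 1 / c := by positivity
        linarith
      exact mul_le_mul_of_nonneg_right (h2.trans h3) (Real.rpow_nonneg hx0.le _)
    calc (x + 1) ^ (p - 1) ≤ (1 + 1 / c) ^ p * x ^ (p - 1) := hstep
      _ ≤ (1 + 1 / c) ^ p / p * ((x + 1) ^ p - x ^ p) := by
          rw [div_mul_eq_mul_div, le_div_iff₀ hp]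
          have h1 : p * x ^ (p - 1) ≤ (x + 1) ^ p - x ^ p := by linarith
          calc (1 + 1 / c) ^ p * x ^ (p - 1) * p
              = (1 + 1 / c) ^ p * (p * x ^ (p - 1)) := by ring
            _ ≤ (1 + 1 / c) ^ p * ((x + 1) ^ p - x ^ p) :=
                mul_le_mul_of_nonneg_left h1 (by positivity)

/-- The key summation bound by induction. -/
private lemma sum_bound {c p : ℝ} (hc : 0 < c) (hp : 0 < p) : ∀ n : ℕ, 1 ≤ n →
    ∑ k ∈ Finset.Icc 1 n, (c + (k : ℝ)) ^ (p + 1) / (k : ℝ) ^ 2 ≤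
      ((1 + c) ^ 2 * ((1 + 1 / c) ^ p / p) + (1 + c)) * (c + (n : ℝ)) ^ p := by
  intro n hn
  set C₀ : ℝ := (1 + c) ^ 2 * ((1 + 1 / c) ^ p / p) + (1 + c) with hC₀
  induction n, hn using Nat.le_induction with
  | base =>
      simp only [Finset.Icc_self, Finset.sum_singleton, Nat.cast_one, one_pow, div_one]
      have h1 : (c + (1:ℝ)) ^ (p + 1) = (c + 1) ^ p * (c + 1) := by
        rw [Real.rpow_add_one (by positivity)]
      rw [h1]
      have hle : (c + 1 : ℝ) ≤ C₀ := by
        have : (0:ℝ) ≤ (1 + c) ^ 2 * ((1 + 1 / c) ^ p / p) := by positivity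
        rw [hC₀]; linarith
      calc (c + 1 : ℝ) ^ p * (c + 1) ≤ (c + 1) ^ p * C₀ := by
            apply mul_le_mul_of_nonneg_left hle (Real.rpow_nonneg (by positivity) _)
        _ = C₀ * (c + (1:ℝ)) ^ p := by ring_nf
  | succ n hn ih =>
      rw [Finset.sum_Icc_succ_top (by omega : 1 ≤ n + 1)]
      have hx : c ≤ c + (n : ℝ) := by
        have : (0:ℝ) ≤ (n:ℝ) := by positivity
        linarith
      have hdl := diff_lower hc hp hx
      -- term bound
      have hterm : (c + ((n+1 : ℕ) : ℝ)) ^ (p + 1) / ((n+1 : ℕ) : ℝ) ^ 2 ≤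
          C₀ * ((c + (n:ℝ) + 1) ^ p - (c + (n:ℝ)) ^ p) := by
        have hn1 : (1:ℝ) ≤ ((n+1 : ℕ) : ℝ) := by exact_mod_cast Nat.one_le_iff_ne_zero.2 (by omega)
        push_cast
        rw [show c + ((n:ℝ) + 1) = c + (n:ℝ) + 1 from by ring]
        have hcn1 : (0:ℝ) < c + (n:ℝ) + 1 := by positivity
        have hnn : (0:ℝ) < (n:ℝ) + 1 := by positivity
        have hratio : c + (n:ℝ) + 1 ≤ (1 + c) * ((n:ℝ) + 1) := by nlinarith [Nat.cast_nonneg (α := ℝ) n]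
        have h1 : (c + (n:ℝ) + 1) ^ (p + 1) = (c + (n:ℝ) + 1) ^ (p - 1) * (c + (n:ℝ) + 1) ^ 2 := by
          rw [← Real.rpow_natCast (c + (n:ℝ) + 1) 2, ← Real.rpow_add hcn1]
          congr 1
          push_cast
          ring
        have h2 : (c + (n:ℝ) + 1) ^ (p + 1) / ((n:ℝ) + 1) ^ 2 ≤
            (1 + c) ^ 2 * (c + (n:ℝ) + 1) ^ (p - 1) := by
          rw [h1, div_le_iff₀ (by positivity)]
          have hsq : (c + (n:ℝ) + 1) ^ 2 ≤ (1 + c) ^ 2 * ((n:ℝ) + 1) ^ 2 := by nlinarith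
          calc (c + (n:ℝ) + 1) ^ (p - 1) * (c + (n:ℝ) + 1) ^ 2
              ≤ (c + (n:ℝ) + 1) ^ (p - 1) * ((1 + c) ^ 2 * ((n:ℝ) + 1) ^ 2) :=
                mul_le_mul_of_nonneg_left hsq (Real.rpow_nonneg hcn1.le _)
            _ = (1 + c) ^ 2 * (c + (n:ℝ) + 1) ^ (p - 1) * ((n:ℝ) + 1) ^ 2 := by ring
        have h3 : (1 + c) ^ 2 * (c + (n:ℝ) + 1) ^ (p - 1) ≤
            (1 + c) ^ 2 * ((1 + 1 / c) ^ p / p) * ((c + (n:ℝ) + 1) ^ p - (c + (n:ℝ)) ^ p) := by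
          have := mul_le_mul_of_nonneg_left hdl (by positivity : (0:ℝ) ≤ (1 + c) ^ 2)
          calc (1 + c) ^ 2 * (c + (n:ℝ) + 1) ^ (p - 1)
              = (1 + c) ^ 2 * (c + (n:ℝ) + 1) ^ (p - 1) := rfl
            _ ≤ (1 + c) ^ 2 * ((1 + 1 / c) ^ p / p * ((c + (n:ℝ) + 1) ^ p - (c + (n:ℝ)) ^ p)) := by
                have hdl' := hdl
                rw [show c + (n:ℝ) + 1 = (c + (n:ℝ)) + 1 by ring] at *
                exact this
            _ = (1 + c) ^ 2 * ((1 + 1 / c) ^ p / p) * ((c + (n:ℝ) + 1) ^ p - (c + (n:ℝ)) ^ p) := by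
                ring
        have hdiff_nonneg : (0:ℝ) ≤ (c + (n:ℝ) + 1) ^ p - (c + (n:ℝ)) ^ p := by
          have := Real.rpow_le_rpow (by positivity : (0:ℝ) ≤ c + (n:ℝ)) (by linarith : c + (n:ℝ) ≤ c + (n:ℝ) + 1) hp.le
          linarith
        have h4 : (1 + c) * ((c + (n:ℝ) + 1) ^ p - (c + (n:ℝ)) ^ p) ≥ 0 := by positivity
        calc (c + (n:ℝ) + 1) ^ (p + 1) / ((n:ℝ) + 1) ^ 2
            ≤ (1 + c) ^ 2 * ((1 + 1 / c) ^ p / p) * ((c + (n:ℝ) + 1) ^ p - (c + (n:ℝ)) ^ p) :=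
              h2.trans h3
          _ ≤ C₀ * ((c + (n:ℝ) + 1) ^ p - (c + (n:ℝ)) ^ p) := by rw [hC₀]; nlinarith
      have hcast : (c + ((n+1 : ℕ) : ℝ)) = c + (n:ℝ) + 1 := by push_cast; ring
      calc (∑ k ∈ Finset.Icc 1 n, (c + (k : ℝ)) ^ (p + 1) / (k : ℝ) ^ 2) +
            (c + ((n+1 : ℕ) : ℝ)) ^ (p + 1) / ((n+1 : ℕ) : ℝ) ^ 2
          ≤ C₀ * (c + (n:ℝ)) ^ p + C₀ * ((c + (n:ℝ) + 1) ^ p - (c + (n:ℝ)) ^ p) :=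
            add_le_add ih hterm
        _ = C₀ * (c + (n:ℝ) + 1) ^ p := by ring
        _ = C₀ * (c + ((n+1 : ℕ) : ℝ)) ^ p := by rw [hcast]

/-- With `γ_k = κc/(c+k)` and `μcκ > 1/2`, there is a constant `C` (depending only on
`μ, c, κ`) with `∑_{k=1}^n exp(-2μ(Γ_n - Γ_k))/(μ²k²) ≤ C/(n+c)` for all `n ≥ 1`,
where `Γ_n = ∑_{i=1}^n κc/(c+i)`. -/
theorem stmt5 (κ c μ : ℝ) (hκ : κ ∈ Set.Ioo (0 : ℝ) 1) (hc : 0 < c) (hμ : 0 < μ)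
    (h : 1 / 2 < μ * c * κ)
    (Γ : ℕ → ℝ) (hΓ : ∀ n : ℕ, Γ n = ∑ i ∈ Finset.Icc 1 n, κ * c / (c + i)) :
    ∃ C : ℝ, ∀ n : ℕ, 1 ≤ n →
      ∑ k ∈ Finset.Icc 1 n, Real.exp (-2 * μ * (Γ n - Γ k)) / (μ ^ 2 * (k : ℝ) ^ 2) ≤
        C / ((n : ℝ) + c) := by
  obtain ⟨hκ0, hκ1⟩ := hκ
  set a : ℝ := 2 * μ * c * κ with ha_def
  have ha1 : 1 < a := by rw [ha_def]; nlinarith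
  have ha0 : 0 < a := by linarith
  set p : ℝ := a - 1 with hp_def
  have hp : 0 < p := by rw [hp_def]; linarith
  have hap : a = p + 1 := by rw [hp_def]; ring
  set M : ℝ := 1 + 1 / (1 + c) with hM_def
  have hM0 : 0 < M := by rw [hM_def]; positivity
  set C₀ : ℝ := (1 + c) ^ 2 * ((1 + 1 / c) ^ p / p) + (1 + c) with hC₀_def
  have hC₀0 : 0 < C₀ := by rw [hC₀_def]; positivity
  refine ⟨M ^ a * C₀ / μ ^ 2, fun n hn => ?_⟩
  have hcn : (0:ℝ) < c + (n:ℝ) := by positivity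
  -- per-term bound
  have hterm : ∀ k ∈ Finset.Icc 1 n,
      Real.exp (-2 * μ * (Γ n - Γ k)) / (μ ^ 2 * (k : ℝ) ^ 2) ≤
        M ^ a / (μ ^ 2 * (c + (n:ℝ)) ^ a) * ((c + (k:ℝ)) ^ (p + 1) / (k : ℝ) ^ 2) := by
    intro k hk
    rw [Finset.mem_Icc] at hk
    obtain ⟨hk1, hkn⟩ := hk
    have hk0 : (0:ℝ) < (k:ℝ) := by exact_mod_cast Nat.lt_of_lt_of_le Nat.zero_lt_one hk1
    have hk1' : (1:ℝ) ≤ (k:ℝ) := by exact_mod_cast hk1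
    have hck : (0:ℝ) < c + (k:ℝ) := by positivity
    -- Γ n - Γ k as a sum over Ioc k n
    have hgap : Γ n - Γ k = ∑ i ∈ Finset.Ioc k n, κ * c / (c + (i:ℝ)) := by
      have h1 : ∀ m : ℕ, Γ m = ∑ i ∈ Finset.Ioc 0 m, κ * c / (c + (i:ℝ)) := by
        intro m
        rw [hΓ m]
        congr 1
      rw [h1 n, h1 k,
        ← Finset.sum_Ioc_consecutive (fun i : ℕ => κ * c / (c + (i:ℝ))) (Nat.zero_le k) hkn]
      ring
    -- log lower bound for the gap
    have hlog : κ * c * (Real.log (c + (n:ℝ) + 1) - Real.log (c + (k:ℝ) + 1)) ≤ Γ n - Γ k := by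
      rw [hgap, ← tele_log c k n hkn, Finset.mul_sum]
      apply Finset.sum_le_sum
      intro i hi
      rw [Finset.mem_Ioc] at hi
      have hci : (0:ℝ) < c + (i:ℝ) := by positivity
      have hlg : Real.log (c + (i:ℝ) + 1) - Real.log (c + (i:ℝ)) ≤ 1 / (c + (i:ℝ)) := by
        rw [← Real.log_div (by positivity) hci.ne']
        have := Real.log_le_sub_one_of_pos (show (0:ℝ) < (c + (i:ℝ) + 1) / (c + (i:ℝ)) by positivity)
        have heq : (c + (i:ℝ) + 1) / (c + (i:ℝ)) - 1 = 1 / (c + (i:ℝ)) := by field_simp; ring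
        linarith
      calc κ * c * (Real.log (c + (i:ℝ) + 1) - Real.log (c + (i:ℝ)))
          ≤ κ * c * (1 / (c + (i:ℝ))) := by
            apply mul_le_mul_of_nonneg_left hlg (by positivity)
        _ = κ * c / (c + (i:ℝ)) := by ring
    -- exponential bound
    have hKpos : (0:ℝ) < c + (k:ℝ) + 1 := by positivity
    have hNpos : (0:ℝ) < c + (n:ℝ) + 1 := by positivity
    have hexp : Real.exp (-2 * μ * (Γ n - Γ k)) ≤
        ((c + (k:ℝ) + 1) / (c + (n:ℝ) + 1)) ^ a := by
      rw [Real.rpow_def_of_pos (by positivity)]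
      apply Real.exp_le_exp.2
      have harg : -2 * μ * (Γ n - Γ k) ≤
          a * (Real.log (c + (k:ℝ) + 1) - Real.log (c + (n:ℝ) + 1)) := by
        have h2 : -2 * μ * (Γ n - Γ k) ≤
            -2 * μ * (κ * c * (Real.log (c + (n:ℝ) + 1) - Real.log (c + (k:ℝ) + 1))) := by
          apply mul_le_mul_of_nonpos_left hlog (by linarith)
        calc -2 * μ * (Γ n - Γ k)
            ≤ -2 * μ * (κ * c * (Real.log (c + (n:ℝ) + 1) - Real.log (c + (k:ℝ) + 1))) := h2
          _ = a * (Real.log (c + (k:ℝ) + 1) - Real.log (c + (n:ℝ) + 1)) := by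
              rw [ha_def]; ring
      calc -2 * μ * (Γ n - Γ k)
          ≤ a * (Real.log (c + (k:ℝ) + 1) - Real.log (c + (n:ℝ) + 1)) := harg
        _ = Real.log ((c + (k:ℝ) + 1) / (c + (n:ℝ) + 1)) * a := by
            rw [Real.log_div hKpos.ne' hNpos.ne']; ring
    -- ratio bound
    have hratio : (c + (k:ℝ) + 1) / (c + (n:ℝ) + 1) ≤ M * (c + (k:ℝ)) / (c + (n:ℝ)) := by
      have h1 : c + (k:ℝ) + 1 ≤ M * (c + (k:ℝ)) := by
        rw [hM_def]
        have h2 : (1:ℝ) ≤ (c + (k:ℝ)) / (1 + c) := by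
          rw [le_div_iff₀ (by positivity)]
          linarith
        have h3 : (1 + 1 / (1 + c)) * (c + (k:ℝ)) = (c + (k:ℝ)) + (c + (k:ℝ)) / (1 + c) := by
          ring
        rw [h3]
        linarith
      exact div_le_div₀ (by positivity) h1 hcn (by linarith)
    have hrpow : ((c + (k:ℝ) + 1) / (c + (n:ℝ) + 1)) ^ a ≤
        M ^ a * ((c + (k:ℝ)) ^ a / (c + (n:ℝ)) ^ a) := by
      have h1 := Real.rpow_le_rpow (by positivity) hratio ha0.le
      calc ((c + (k:ℝ) + 1) / (c + (n:ℝ) + 1)) ^ a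
          ≤ (M * (c + (k:ℝ)) / (c + (n:ℝ))) ^ a := h1
        _ = (M * ((c + (k:ℝ)) / (c + (n:ℝ)))) ^ a := by rw [mul_div_assoc]
        _ = M ^ a * ((c + (k:ℝ)) / (c + (n:ℝ))) ^ a :=
            Real.mul_rpow hM0.le (by positivity)
        _ = M ^ a * ((c + (k:ℝ)) ^ a / (c + (n:ℝ)) ^ a) := by
            rw [Real.div_rpow hck.le hcn.le]
    have hfin : Real.exp (-2 * μ * (Γ n - Γ k)) ≤
        M ^ a * ((c + (k:ℝ)) ^ a / (c + (n:ℝ)) ^ a) := hexp.trans hrpow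
    rw [div_le_iff₀ (by positivity : (0:ℝ) < μ ^ 2 * (k:ℝ) ^ 2)]
    have heq : M ^ a / (μ ^ 2 * (c + (n:ℝ)) ^ a) * ((c + (k:ℝ)) ^ (p + 1) / (k : ℝ) ^ 2) *
        (μ ^ 2 * (k:ℝ) ^ 2) = M ^ a * ((c + (k:ℝ)) ^ a / (c + (n:ℝ)) ^ a) := by
      rw [← hap]
      have hna : (0:ℝ) < (c + (n:ℝ)) ^ a := Real.rpow_pos_of_pos hcn a
      field_simp
    rw [heq]
    exact hfin
  calc ∑ k ∈ Finset.Icc 1 n, Real.exp (-2 * μ * (Γ n - Γ k)) / (μ ^ 2 * (k : ℝ) ^ 2)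
      ≤ ∑ k ∈ Finset.Icc 1 n,
          M ^ a / (μ ^ 2 * (c + (n:ℝ)) ^ a) * ((c + (k:ℝ)) ^ (p + 1) / (k : ℝ) ^ 2) :=
        Finset.sum_le_sum hterm
    _ = M ^ a / (μ ^ 2 * (c + (n:ℝ)) ^ a) *
          ∑ k ∈ Finset.Icc 1 n, (c + (k:ℝ)) ^ (p + 1) / (k : ℝ) ^ 2 := by
        rw [Finset.mul_sum]
    _ ≤ M ^ a / (μ ^ 2 * (c + (n:ℝ)) ^ a) * (C₀ * (c + (n:ℝ)) ^ p) := by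
        apply mul_le_mul_of_nonneg_left _ (by positivity)
        exact sum_bound hc hp n hn
    _ = M ^ a * C₀ / μ ^ 2 / ((n:ℝ) + c) := by
        have h1 : (c + (n:ℝ)) ^ a = (c + (n:ℝ)) ^ p * (c + (n:ℝ)) := by
          rw [hap, Real.rpow_add_one hcn.ne']
        rw [h1]
        have hnp : (0:ℝ) < (c + (n:ℝ)) ^ p := Real.rpow_pos_of_pos hcn p
        field_simp
        ring
end

section
/- Combining the two previous facts: if G: ℝ^d\{0} → D ⊂ ℝ^d is the argmin map of a compact set with G(aθ) = G(θ) for a > 0 and ‖G(u)-G(v)‖ ≤ J‖u-v‖ for unit vectors, then for θ*, θ ≠ 0, (θ*)ᵀ(G(θ) - G(θ*)) ≤ 2J ‖θ* - θ‖² / ‖θ*‖. -/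
open scoped RealInnerProductSpace

lemma normalize_sub_le {E : Type*} [NormedAddCommGroup E] [NormedSpace ℝ E]
    (u v : E) (hu : u ≠ 0) (hv : v ≠ 0) :
    ‖‖u‖⁻¹ • u - ‖v‖⁻¹ • v‖ ≤ 2 * ‖u - v‖ / ‖u‖ := by
  have hu' : (0:ℝ) < ‖u‖ := norm_pos_iff.mpr hu
  have hv' : (0:ℝ) < ‖v‖ := norm_pos_iff.mpr hv
  have key : ‖u‖⁻¹ • u - ‖v‖⁻¹ • v = ‖u‖⁻¹ • (u - v) + (‖u‖⁻¹ - ‖v‖⁻¹) • v := by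
    rw [smul_sub, sub_smul]
    abel
  rw [key]
  have h1 : ‖‖u‖⁻¹ • (u - v)‖ = ‖u - v‖ / ‖u‖ := by
    rw [norm_smul, norm_inv, norm_norm]; ring
  have h2 : ‖(‖u‖⁻¹ - ‖v‖⁻¹) • v‖ ≤ ‖u - v‖ / ‖u‖ := by
    rw [norm_smul, Real.norm_eq_abs]
    have hfrac : ‖u‖⁻¹ - ‖v‖⁻¹ = (‖v‖ - ‖u‖) / (‖u‖ * ‖v‖) := by
      field_simp
    have heq : |‖u‖⁻¹ - ‖v‖⁻¹| * ‖v‖ = |‖v‖ - ‖u‖| / ‖u‖ := by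
      rw [hfrac, abs_div, abs_of_pos (mul_pos hu' hv')]
      field_simp
    rw [heq]
    have habs : |‖v‖ - ‖u‖| ≤ ‖u - v‖ := by
      rw [abs_sub_comm]
      exact abs_norm_sub_norm_le u v
    gcongr
  calc ‖‖u‖⁻¹ • (u - v) + (‖u‖⁻¹ - ‖v‖⁻¹) • v‖
      ≤ ‖‖u‖⁻¹ • (u - v)‖ + ‖(‖u‖⁻¹ - ‖v‖⁻¹) • v‖ := norm_add_le _ _
    _ ≤ ‖u - v‖ / ‖u‖ + ‖u - v‖ / ‖u‖ := by rw [h1]; linarith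
    _ = 2 * ‖u - v‖ / ‖u‖ := by ring

/-- If `G` is the argmin map of a compact set `D` (unique minimizer of `x ↦ ⟪θ, x⟫`),
scale invariant, and `J`-Lipschitz on unit vectors, then for nonzero `θ*, θ`:
`⟪θ*, G(θ) - G(θ*)⟫ ≤ 2J‖θ* - θ‖²/‖θ*‖`. -/
theorem stmt16 {d : ℕ} (D : Set (EuclideanSpace ℝ (Fin d))) (hD : IsCompact D)
    (G : EuclideanSpace ℝ (Fin d) → EuclideanSpace ℝ (Fin d)) (J : ℝ) (hJ : 0 < J)
    (hG : ∀ θ : EuclideanSpace ℝ (Fin d), θ ≠ 0 →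
      G θ ∈ D ∧ ∀ x ∈ D, ⟪θ, G θ⟫ ≤ ⟪θ, x⟫)
    (hscale : ∀ (a : ℝ), 0 < a → ∀ θ : EuclideanSpace ℝ (Fin d), θ ≠ 0 → G (a • θ) = G θ)
    (hlip : ∀ u v : EuclideanSpace ℝ (Fin d), ‖u‖ = 1 → ‖v‖ = 1 →
      ‖G u - G v‖ ≤ J * ‖u - v‖)
    (θs θ : EuclideanSpace ℝ (Fin d)) (hθs : θs ≠ 0) (hθ : θ ≠ 0) :
    ⟪θs, G θ - G θs⟫ ≤ 2 * J * ‖θs - θ‖ ^ 2 / ‖θs‖ := by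
  have hθs' : (0:ℝ) < ‖θs‖ := norm_pos_iff.mpr hθs
  have hθ' : (0:ℝ) < ‖θ‖ := norm_pos_iff.mpr hθ
  have hopt : ⟪θ, G θ - G θs⟫ ≤ 0 := by
    have := (hG θ hθ).2 (G θs) (hG θs hθs).1
    rw [inner_sub_right]; linarith
  have step1 : ⟪θs, G θ - G θs⟫ ≤ ⟪θs - θ, G θ - G θs⟫ := by
    rw [inner_sub_left]; linarith
  have step2 : ⟪θs - θ, G θ - G θs⟫ ≤ ‖θs - θ‖ * ‖G θ - G θs‖ :=
    real_inner_le_norm _ _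
  -- Lipschitz bound via normalization
  set u := ‖θs‖⁻¹ • θs with hu
  set v := ‖θ‖⁻¹ • θ with hv
  have hun : ‖u‖ = 1 := norm_smul_inv_norm hθs
  have hvn : ‖v‖ = 1 := norm_smul_inv_norm hθ
  have hGu : G u = G θs := hscale _ (inv_pos.mpr hθs') _ hθs
  have hGv : G v = G θ := hscale _ (inv_pos.mpr hθ') _ hθ
  have hLip : ‖G θ - G θs‖ ≤ J * (2 * ‖θs - θ‖ / ‖θs‖) := by
    calc ‖G θ - G θs‖ = ‖G v - G u‖ := by rw [hGu, hGv]
      _ ≤ J * ‖v - u‖ := hlip v u hvn hun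
      _ = J * ‖u - v‖ := by rw [norm_sub_rev]
      _ ≤ J * (2 * ‖θs - θ‖ / ‖θs‖) := by
          gcongr
          exact normalize_sub_le θs θ hθs hθ
  have hnn : (0:ℝ) ≤ ‖θs - θ‖ := norm_nonneg _
  calc ⟪θs, G θ - G θs⟫ ≤ ‖θs - θ‖ * ‖G θ - G θs‖ := le_trans step1 step2
    _ ≤ ‖θs - θ‖ * (J * (2 * ‖θs - θ‖ / ‖θs‖)) := by gcongr
    _ = 2 * J * ‖θs - θ‖ ^ 2 / ‖θs‖ := by ring
end
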